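/- Let E be a Grothendieck topos, X any category, and A a small filtered category. If D : A ⥤ (X ⥤ E) is a diagram such that, for every a in A, the functor D(a) : X ⥤ E preserves finite limits and small colimits, then the colimit of D in the functor category X ⥤ E (computed pointwise) again preserves finite limits and small colimits; hence the full subcategory of X ⥤ E spanned by finite-limit-preserving, small-colimit-preserving functors is closed under filtered colimits. (The category of E-points of any Grothendieck topos has filtered colimits.) -/

import Mathlib

universe w v u

open CategoryTheory Limits

/-- A functor is (the inverse image of) a generalised point if it preserves finite limits
and small colimits. -/
def IsPoint {X : Type*} [Category X] {E : Type*} [Category E] (G : X ⥤ E) : Prop :=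
  Nonempty (PreservesFiniteLimits G) ∧ Nonempty (PreservesColimitsOfSize.{u, u} G)

/-- The category of `E`-points of any Grothendieck topos has filtered colimits: a
pointwise filtered colimit of functors preserving finite limits and small colimits again
preserves finite limits and small colimits. -/
theorem statement7 {C : Type u} [SmallCategory C] (J : GrothendieckTopology C)
    (X : Type v) [Category.{w} X]
    (A : Type u) [SmallCategory A] [IsFiltered A]
    (D : A ⥤ (X ⥤ Sheaf J (Type u)))
    (hD : ∀ a : A, IsPoint.{u} (D.obj a)) :
    IsPoint.{u} (colimit D) := by
  haveI hfl : ∀ a : A, PreservesFiniteLimits (D.obj a) := fun a => (hD a).1.some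
  have hcol : ∀ a : A, PreservesColimitsOfSize.{u, u} (D.obj a) := fun a => (hD a).2.some
  constructor
  · -- finite limits
    let ι := sheafToPresheaf J (Type u)
    let L := presheafToSheaf J (Type u)
    let D' : A ⥤ X ⥤ (Cᵒᵖ ⥤ Type u) := D ⋙ (Functor.whiskeringRight X _ _).obj ι
    have e1 : colimit (D' ⋙ (Functor.whiskeringRight X _ _).obj L) ≅ colimit D' ⋙ L :=
      colimitCompWhiskeringRightIsoColimitComp L D'
    have e2 : D' ⋙ (Functor.whiskeringRight X _ _).obj L ≅ D :=
      Functor.isoWhiskerLeft D ((Functor.whiskeringRight X _ _).mapIso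
        (asIso (sheafificationAdjunction J (Type u)).counit))
    have key : colimit D ≅ colimit D' ⋙ L :=
      (HasColimit.isoOfNatIso e2).symm ≪≫ e1
    haveI : ∀ a : A, PreservesFiniteLimits (D'.obj a) := fun a =>
      comp_preservesFiniteLimits (D.obj a) ι
    haveI : PreservesFiniteLimits D'.flip := ⟨fun Jf _ _ =>
      preservesLimitsOfShape_of_evaluation D'.flip Jf (fun a =>
        preservesLimitsOfShape_of_natIso (flipCompEvaluation D' a).symm)⟩
    haveI : PreservesFiniteLimits (colim : (A ⥤ (Cᵒᵖ ⥤ Type u)) ⥤ _) :=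
      ⟨fun Jf _ _ => inferInstance⟩
    haveI : PreservesFiniteLimits (D'.flip ⋙ colim) := comp_preservesFiniteLimits _ _
    haveI : PreservesFiniteLimits (colimit D') :=
      preservesFiniteLimits_of_natIso (colimitFlipIsoCompColim D'.flip).symm
    haveI : PreservesFiniteLimits (colimit D' ⋙ L) := comp_preservesFiniteLimits _ _
    exact ⟨preservesFiniteLimits_of_natIso key.symm⟩
  · -- small colimits
    haveI : PreservesColimitsOfSize.{u, u} D.flip := ⟨fun {S} _ =>
      preservesColimitsOfShape_of_evaluation D.flip S (fun a =>
        letI := hcol a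
        preservesColimitsOfShape_of_natIso (flipCompEvaluation D a).symm)⟩
    haveI : PreservesColimitsOfSize.{u, u}
        (colim : (A ⥤ Sheaf J (Type u)) ⥤ _) :=
      colimConstAdj.leftAdjoint_preservesColimits
    haveI : PreservesColimitsOfSize.{u, u} (D.flip ⋙ colim) :=
      comp_preservesColimits _ _
    exact ⟨preservesColimits_of_natIso (colimitFlipIsoCompColim D.flip).symm⟩
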